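/- Suppose v_i = R f_i + y_i for i = 1,...,N with ‖y_i‖_∞ ≤ 1 and R ≥ 2N. Then √N · B₂ᴺ ⊆ absconv(v₁,...,v_N). -/

import Mathlib

/-- If `vᵢ = R·fᵢ + yᵢ` with `‖yᵢ‖_∞ ≤ 1` and `R ≥ 2N`, then `√N·B₂ᴺ` is contained
in the absolutely convex hull of `v₁,…,v_N`. -/
theorem stmt16 {N : ℕ} (hN : 0 < N) (R : ℝ) (hR : (2 : ℝ) * N ≤ R)
    (y : Fin N → EuclideanSpace ℝ (Fin N)) (hy : ∀ i j, |y i j| ≤ 1)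
    (v : Fin N → EuclideanSpace ℝ (Fin N))
    (hv : ∀ i, v i = R • EuclideanSpace.single i 1 + y i) :
    Metric.closedBall (0 : EuclideanSpace ℝ (Fin N)) (Real.sqrt N) ⊆
      convexHull ℝ (Set.range v ∪ (-(Set.range v))) := by
  intro x hx
  have hNpos : (0:ℝ) < N := by exact_mod_cast hN
  have hR0 : (0:ℝ) < R := lt_of_lt_of_le (by linarith) hR
  -- the ℓ¹ space of coefficients
  set E := PiLp 1 (fun _ : Fin N => ℝ) with hE
  have hnorm : ∀ c : E, ‖c‖ = ∑ i, |c i| := by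
    intro c
    rw [PiLp.norm_eq_sum (by norm_num)]
    simp [Real.norm_eq_abs]
  have hdist : ∀ c c' : E, dist c c' = ∑ i, |c i - c' i| := by
    intro c c'
    rw [dist_eq_norm, hnorm]
    rfl
  -- the contraction
  set T : E → E := fun c => WithLp.toLp 1 (fun j => (x j - ∑ i, y i j * c i) / R : Fin N → ℝ) with hT
  have hTapp : ∀ (c : E) (j : Fin N), T c j = (x j - ∑ i, y i j * c i) / R := fun _ _ => rfl
  have key : ∀ c c' : E, dist (T c) (T c') ≤ (N / R) * dist c c' := by
    intro c c'
    rw [hdist, hdist]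
    have h1 : ∀ j : Fin N, |T c j - T c' j| ≤ (∑ i, |c i - c' i|) / R := by
      intro j
      have : T c j - T c' j = (∑ i, y i j * (c' i - c i)) / R := by
        rw [hTapp, hTapp, div_sub_div_same]
        congr 1
        simp only [mul_sub, Finset.sum_sub_distrib]
        ring
      rw [this, abs_div, abs_of_pos hR0]
      gcongr
      calc |∑ i, y i j * (c' i - c i)| ≤ ∑ i, |y i j * (c' i - c i)| :=
            Finset.abs_sum_le_sum_abs _ _
        _ ≤ ∑ i, |c i - c' i| := by
            apply Finset.sum_le_sum
            intro i _
            rw [abs_mul]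
            calc |y i j| * |c' i - c i| ≤ 1 * |c' i - c i| :=
                  mul_le_mul_of_nonneg_right (hy i j) (abs_nonneg _)
              _ = |c i - c' i| := by rw [one_mul, abs_sub_comm]
    calc ∑ j, |T c j - T c' j| ≤ ∑ _j : Fin N, (∑ i, |c i - c' i|) / R :=
          Finset.sum_le_sum fun j _ => h1 j
      _ = (N / R) * ∑ i, |c i - c' i| := by
          rw [Finset.sum_const, Finset.card_univ, Fintype.card_fin, nsmul_eq_mul]
          ring
  have hNR : N / R ≤ (1:ℝ)/2 := by
    rw [div_le_div_iff₀ hR0 (by norm_num)]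
    linarith
  have hlip : LipschitzWith (1/2) T := by
    apply LipschitzWith.of_dist_le_mul
    intro c c'
    have h := (key c c').trans (mul_le_mul_of_nonneg_right hNR dist_nonneg)
    have hcoe : ((1/2 : NNReal) : ℝ) = 1/2 := by norm_num
    rw [hcoe]
    exact h
  have hcontr : ContractingWith (1/2) T := ⟨one_half_lt_one, hlip⟩
  set c : E := hcontr.fixedPoint T with hc
  have hfix : T c = c := hcontr.fixedPoint_isFixedPt
  -- bound on ∑ |x j|
  have hxball : ∑ j, (x j)^2 ≤ N := by
    have := mem_closedBall_zero_iff.mp hx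
    have h2 : ‖x‖^2 ≤ (Real.sqrt N)^2 := by
      apply sq_le_sq' _ this
      linarith [norm_nonneg x, Real.sqrt_nonneg (N:ℝ)]
    rw [Real.sq_sqrt hNpos.le] at h2
    rw [EuclideanSpace.norm_eq] at h2
    rw [Real.sq_sqrt (by positivity)] at h2
    simpa [Real.norm_eq_abs, sq_abs] using h2
  have hx1 : ∑ j, |x j| ≤ N := by
    have hcs : (∑ j, |x j| * 1)^2 ≤ (∑ j, |x j|^2) * (∑ _j : Fin N, (1:ℝ)^2) :=
      Finset.sum_mul_sq_le_sq_mul_sq _ _ _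
    simp only [mul_one, one_pow, sq_abs, Finset.sum_const, Finset.card_univ,
      Fintype.card_fin, nsmul_eq_mul] at hcs
    have h3 : (∑ j, |x j|)^2 ≤ (N:ℝ) * N := by
      calc (∑ j, |x j|)^2 ≤ (∑ j, (x j)^2) * N := hcs
        _ ≤ (N:ℝ) * N := mul_le_mul_of_nonneg_right hxball hNpos.le
    calc ∑ j, |x j| = Real.sqrt ((∑ j, |x j|)^2) :=
          (Real.sqrt_sq (Finset.sum_nonneg fun j _ => abs_nonneg _)).symm
      _ ≤ Real.sqrt ((N:ℝ) * N) := Real.sqrt_le_sqrt h3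
      _ = N := Real.sqrt_mul_self hNpos.le
  -- bound on ‖c‖₁
  have hT0 : ‖T 0‖ ≤ N / R := by
    rw [hnorm]
    have : ∀ j : Fin N, |T (0:E) j| = |x j| / R := by
      intro j
      rw [hTapp]
      have : ∑ i, y i j * (0:E) i = 0 := by
        apply Finset.sum_eq_zero; intro i _; exact mul_zero _
      rw [this, sub_zero, abs_div, abs_of_pos hR0]
    rw [Finset.sum_congr rfl (fun j _ => this j), ← Finset.sum_div]
    gcongr
  have hcbound : ∑ i, |c i| ≤ 1 := by
    have h1 : dist c (0:E) ≤ 2 * (N / R) := by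
      have h2 : dist c (0:E) ≤ dist (T c) (T 0) + dist (T 0) 0 := by
        have htri := dist_triangle c (T 0) (0:E)
        nth_rewrite 2 [← hfix] at htri
        exact htri
      have h3 : dist (T c) (T 0) ≤ (N/R) * dist c 0 := key c 0
      have h4 : dist (T 0) (0:E) ≤ N / R := by
        rw [dist_zero_right]; exact hT0
      have h5 : (N/R) * dist c 0 ≤ (1/2) * dist c 0 :=
        mul_le_mul_of_nonneg_right hNR dist_nonneg
      have := h2.trans (add_le_add (h3.trans h5) h4)
      linarith
    have h6 : 2 * (N / R) ≤ 1 := by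
      rw [← mul_div_assoc, div_le_one hR0]
      linarith
    have h7 : dist c (0:E) = ∑ i, |c i| := by
      rw [dist_zero_right, hnorm]
    linarith
  -- x = ∑ cᵢ vᵢ
  have hrep : x = ∑ i, c i • v i := by
    ext j
    have happ : (∑ i, c i • v i) j = ∑ i, c i * v i j := by
      rw [show ((∑ i, c i • v i : EuclideanSpace ℝ (Fin N)) j)
            = ∑ i, (c i • v i : EuclideanSpace ℝ (Fin N)) j from
          by rw [WithLp.ofLp_sum]; exact Finset.sum_apply j Finset.univ _]
      exact Finset.sum_congr rfl fun i _ => rfl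
    rw [happ]
    have hfj : c j = (x j - ∑ i, y i j * c i) / R := by
      conv_lhs => rw [← hfix]
    have hxj : x j = R * c j + ∑ i, y i j * c i := by
      rw [hfj]; field_simp; ring
    calc x j = R * c j + ∑ i, y i j * c i := hxj
      _ = ∑ i, c i * v i j := by
          have : ∀ i : Fin N, c i * v i j = c i * (R * (if j = i then (1:ℝ) else 0)) + c i * y i j := by
            intro i
            rw [hv]
            have : (R • EuclideanSpace.single i (1:ℝ) + y i) j
                = R * (if j = i then (1:ℝ) else 0) + y i j := by
              simp [EuclideanSpace.single_apply]
            rw [this]; ring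
          rw [Finset.sum_congr rfl (fun i _ => this i), Finset.sum_add_distrib]
          congr 1
          · rw [Finset.sum_eq_single j]
            · simp [mul_comm]
            · intro i _ hij
              simp [Ne.symm hij]
            · simp
          · apply Finset.sum_congr rfl; intro i _; ring
  -- conclude via convexity
  set S := Set.range v ∪ (-(Set.range v)) with hS
  set K := convexHull ℝ S with hK
  have hconv : Convex ℝ K := convex_convexHull ℝ S
  have hvK : ∀ i, v i ∈ K := fun i => subset_convexHull ℝ S (Or.inl ⟨i, rfl⟩)
  have hnvK : ∀ i, -v i ∈ K := fun i =>
    subset_convexHull ℝ S (Or.inr (by rw [Set.neg_mem_neg]; exact ⟨i, rfl⟩))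
  have h0K : (0 : EuclideanSpace ℝ (Fin N)) ∈ K := by
    have i0 : Fin N := ⟨0, hN⟩
    have := hconv (hvK i0) (hnvK i0) (by norm_num : (0:ℝ) ≤ 1/2)
      (by norm_num : (0:ℝ) ≤ 1/2) (by norm_num)
    simpa [smul_neg] using this
  -- convex combination over Option (Fin N)
  set w : Fin N → EuclideanSpace ℝ (Fin N) := fun i => if 0 ≤ c i then v i else -v i with hw
  have hwK : ∀ i, w i ∈ K := by
    intro i
    by_cases h : 0 ≤ c i
    · simp only [hw, if_pos h]; exact hvK i
    · simp only [hw, if_neg h]; exact hnvK i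
  have hcw : ∀ i, c i • v i = |c i| • w i := by
    intro i
    by_cases h : 0 ≤ c i
    · simp only [hw, if_pos h]; rw [abs_of_nonneg h]
    · simp only [hw, if_neg h]
      rw [abs_of_neg (not_le.mp h), smul_neg, neg_smul, neg_neg]
  set t := ∑ i, |c i| with ht
  set μ : Option (Fin N) → ℝ := fun o => o.elim (1 - t) (fun i => |c i|) with hμ
  set z : Option (Fin N) → EuclideanSpace ℝ (Fin N) :=
    fun o => o.elim 0 (fun i => w i) with hz
  have hμ0 : ∀ o ∈ Finset.univ, 0 ≤ μ o := by
    rintro (_ | i) _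
    · simp only [hμ, Option.elim]
      linarith
    · exact abs_nonneg _
  have hμ1 : ∑ o : Option (Fin N), μ o = 1 := by
    rw [Fintype.sum_option]
    simp only [hμ, Option.elim]
    rw [← ht]
    ring
  have hzK : ∀ o ∈ Finset.univ, z o ∈ K := by
    rintro (_ | i) _
    · exact h0K
    · exact hwK i
  have := hconv.sum_mem hμ0 hμ1 hzK
  have hsum : ∑ o : Option (Fin N), μ o • z o = x := by
    rw [Fintype.sum_option]
    simp only [hμ, hz, Option.elim, smul_zero, zero_add]
    rw [hrep]
    exact Finset.sum_congr rfl fun i _ => (hcw i).symm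
  rwa [hsum] at this
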